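/- Let A ⊆ ℕ with d⁻(A) = ε > 0 and let (N_i) be a sequence satisfying |A ∩ [0,N_i)|/N_i ≤ ε + 1/i and N_{i+1} > 2 N_i for all i ≥ 1. If B ⊆ A and there exist δ > 0 and infinitely many i with |(A \ B) ∩ [N_i, N_{i+1})| / (N_{i+1} − N_i) ≥ δ, then d⁻(B) ≤ ε − δ/2; in particular d⁻(B) < ε. -/
import Mathlib


open Filter

/-- Lower asymptotic density of a set of naturals. -/
noncomputable def dLow (A : Set ℕ) : ℝ :=
  liminf (fun n : ℕ => (Nat.card (A ∩ Set.Iio n : Set ℕ) : ℝ) / n) atTop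

/-- Upper asymptotic density of a set of naturals. -/
noncomputable def dUp (A : Set ℕ) : ℝ :=
  limsup (fun n : ℕ => (Nat.card (A ∩ Set.Iio n : Set ℕ) : ℝ) / n) atTop

theorem stmt10 (A : Set ℕ) (ε : ℝ) (hε : 0 < ε) (hA : dLow A = ε)
    (N : ℕ → ℕ)
    (hN : ∀ i : ℕ, 1 ≤ i →
      (Nat.card (A ∩ Set.Iio (N i) : Set ℕ) : ℝ) / N i ≤ ε + 1 / i ∧
      2 * N i < N (i + 1))
    (B : Set ℕ) (hB : B ⊆ A) (δ : ℝ) (hδ : 0 < δ)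
    (hinf : ∃ᶠ i in atTop,
      δ * (N (i + 1) - N i : ℝ) ≤
        (Nat.card ((A \ B) ∩ Set.Ico (N i) (N (i + 1)) : Set ℕ) : ℝ)) :
    dLow B ≤ ε - δ / 2 ∧ dLow B < ε := by
  have hgrow : ∀ i, 1 ≤ i → i ≤ N (i + 1) := by
    intro i hi
    induction i with
    | zero => omega
    | succ k ih =>
      rcases Nat.eq_zero_or_pos k with h | h
      · subst h
        have := (hN 1 le_rfl).2
        show 1 ≤ N (1 + 1)
        omega
      · have h1 := ih h
        have h2 := (hN (k + 1) (by omega)).2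
        omega
  have key : ∀ i, 1 ≤ i →
      δ * (N (i + 1) - N i : ℝ) ≤
        (Nat.card ((A \ B) ∩ Set.Ico (N i) (N (i + 1)) : Set ℕ) : ℝ) →
      (Nat.card (B ∩ Set.Iio (N (i + 1)) : Set ℕ) : ℝ) / (N (i + 1)) ≤
        ε + 1 / ((i : ℝ) + 1) - δ / 2 := by
    intro i hi hcard
    set n := N (i + 1) with hn
    have hnpos : 0 < n := lt_of_lt_of_le hi (hgrow i hi)
    have h2N : 2 * N i < n := (hN i hi).2
    have hNA := (hN (i + 1) (by omega)).1
    have hSfin : (A ∩ Set.Iio n : Set ℕ).Finite :=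
      (Set.finite_Iio n).subset Set.inter_subset_right
    have hT1fin : (B ∩ Set.Iio n : Set ℕ).Finite :=
      (Set.finite_Iio n).subset Set.inter_subset_right
    have hT2fin : ((A \ B) ∩ Set.Ico (N i) n : Set ℕ).Finite :=
      (Set.finite_Ico _ _).subset Set.inter_subset_right
    have hsub : (B ∩ Set.Iio n) ∪ ((A \ B) ∩ Set.Ico (N i) n) ⊆ A ∩ Set.Iio n := by
      rintro x (⟨hxB, hx⟩ | ⟨hxA, hx⟩)
      · exact ⟨hB hxB, hx⟩
      · exact ⟨hxA.1, hx.2⟩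
    have hdisj : Disjoint (B ∩ Set.Iio n) ((A \ B) ∩ Set.Ico (N i) n) := by
      rw [Set.disjoint_left]
      rintro x ⟨hxB, _⟩ ⟨hxA, _⟩
      exact hxA.2 hxB
    have hcards : (B ∩ Set.Iio n : Set ℕ).ncard + ((A \ B) ∩ Set.Ico (N i) n : Set ℕ).ncard ≤
        (A ∩ Set.Iio n : Set ℕ).ncard := by
      rw [← Set.ncard_union_eq hdisj hT1fin hT2fin]
      exact Set.ncard_le_ncard hsub hSfin
    simp only [Nat.card_coe_set_eq] at hcard hNA ⊢
    have hnR : (0 : ℝ) < n := by exact_mod_cast hnpos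
    have hA_le : ((A ∩ Set.Iio n : Set ℕ).ncard : ℝ) ≤ (ε + 1 / ((i : ℝ) + 1)) * n := by
      rw [div_le_iff₀ hnR] at hNA
      have : ((i : ℝ) + 1) = ((i + 1 : ℕ) : ℝ) := by push_cast; ring
      rw [this]
      exact hNA
    have hT2_ge : δ * (n : ℝ) / 2 ≤ ((A \ B) ∩ Set.Ico (N i) n : Set ℕ).ncard := by
      have hNi : (N i : ℝ) * 2 < n := by exact_mod_cast (by omega : N i * 2 < n)
      nlinarith
    have hcardsR : ((B ∩ Set.Iio n : Set ℕ).ncard : ℝ) +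
        ((A \ B) ∩ Set.Ico (N i) n : Set ℕ).ncard ≤ (A ∩ Set.Iio n : Set ℕ).ncard := by
      exact_mod_cast hcards
    rw [div_le_iff₀ hnR]
    nlinarith
  have hbound : ∀ c : ℝ,
      (∃ᶠ n in atTop, (Nat.card (B ∩ Set.Iio n : Set ℕ) : ℝ) / n ≤ c) → dLow B ≤ c := by
    intro c hc
    refine liminf_le_of_frequently_le hc ?_
    exact ⟨0, Filter.eventually_map.2 (Filter.Eventually.of_forall fun n => by positivity)⟩
  have hmain : dLow B ≤ ε - δ / 2 := by
    refine le_of_forall_pos_le_add ?_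
    intro η hη
    refine hbound _ ?_
    rw [Filter.frequently_atTop] at hinf ⊢
    intro n₀
    obtain ⟨i, hi, hPi⟩ := hinf (max (max n₀ 1) ⌈1 / η⌉₊)
    have hi1 : 1 ≤ i := le_trans (le_trans (le_max_right n₀ 1) (le_max_left _ _)) hi
    have hin0 : n₀ ≤ i := le_trans (le_trans (le_max_left n₀ 1) (le_max_left _ _)) hi
    have hiceil : ⌈1 / η⌉₊ ≤ i := le_trans (le_max_right _ _) hi
    refine ⟨N (i + 1), le_trans hin0 (hgrow i hi1), ?_⟩
    have hkey := key i hi1 hPi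
    have hηi : 1 / ((i : ℝ) + 1) ≤ η := by
      have h1 : (1 : ℝ) / η ≤ i := le_trans (Nat.le_ceil _) (by exact_mod_cast hiceil)
      rw [div_le_iff₀ (by positivity)]
      rw [div_le_iff₀ hη] at h1
      nlinarith
    linarith
  exact ⟨hmain, lt_of_le_of_lt hmain (by linarith)⟩
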